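/- Weighted repeated-argument sum simplification: for every integer q ≥ 0, every tuple (x_0, …, x_q) of real numbers and every real τ, one has Σ_{j=0}^{q} x_j · e^{-τ[x_0, …, x_q, x_j]} = τ · (d/dτ) e^{-τ[x_0, …, x_q]} − q · e^{-τ[x_0, …, x_q]}, where [x_0, …, x_q, x_j] denotes the tuple (x_0, …, x_q) with x_j appended (so it has length q+2 and argument x_j repeated). -/

import Mathlib

open scoped BigOperators

/-- Complete homogeneous symmetric polynomial of degree `m` in the entries of the list `l`:
`h_m(x_0, …, x_q) = Σ_{k_0+⋯+k_q = m} x_0^{k_0}⋯x_q^{k_q}` (with `h_0 = 1`). -/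
noncomputable def hsymm (l : List ℝ) (m : ℕ) : ℝ :=
  ∑ k ∈ Finset.Nat.antidiagonalTuple l.length m, ∏ i : Fin l.length, l.get i ^ k i

/-- Divided difference of the exponential `e^{t[x_0, …, x_q]}` over the tuple given by the
list `l` (of length `q+1`), defined by its (absolutely convergent) series
`Σ_{m=0}^∞ (t^{q+m}/(q+m)!) · h_m(x_0, …, x_q)`; by convention it is `0` on the empty tuple. -/
noncomputable def dde (t : ℝ) (l : List ℝ) : ℝ :=
  if l.length = 0 then 0
  else ∑' m : ℕ, t ^ (l.length - 1 + m) / (Nat.factorial (l.length - 1 + m)) * hsymm l m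

/-- The sub-tuple `[x_a, …, x_b]` of the sequence `x`, as a list (empty if `b < a`). -/
def seg (x : ℕ → ℝ) (a b : ℕ) : List ℝ :=
  (List.range (b + 1 - a)).map (fun i => x (a + i))



noncomputable def S (n : ℕ) (v : Fin n → ℝ) (m : ℕ) : ℝ :=
  ∑ k ∈ Finset.Nat.antidiagonalTuple n m, ∏ i, v i ^ k i

lemma sum_update_eq {n : ℕ} (k : Fin n → ℕ) (j : Fin n) (a : ℕ) :
    ∑ i, Function.update k j a i = a + ∑ i ∈ Finset.univ.erase j, k i := by
  rw [← Finset.add_sum_erase _ _ (Finset.mem_univ j), Function.update_self]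
  congr 1
  exact Finset.sum_congr rfl fun i hi => Function.update_of_ne (Finset.ne_of_mem_erase hi) _ _

lemma sum_eq_self {n : ℕ} (k : Fin n → ℕ) (j : Fin n) :
    ∑ i, k i = k j + ∑ i ∈ Finset.univ.erase j, k i :=
  (Finset.add_sum_erase _ _ (Finset.mem_univ j)).symm

lemma shift_lemma (n m c : ℕ) (v : Fin n → ℝ) (j : Fin n) (hc1 : 1 ≤ c) (hcm : c ≤ m) :
    v j ^ c * S n v (m - c)
      = ∑ k ∈ (Finset.Nat.antidiagonalTuple n m).filter (fun k => c ≤ k j),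
          ∏ i, v i ^ k i := by
  rw [S, Finset.mul_sum]
  refine Finset.sum_nbij' (i := fun k => Function.update k j (k j + c))
    (j := fun k => Function.update k j (k j - c)) ?_ ?_ ?_ ?_ ?_
  · intro k hk
    rw [Finset.Nat.mem_antidiagonalTuple] at hk
    rw [Finset.mem_filter, Finset.Nat.mem_antidiagonalTuple]
    rw [sum_eq_self k j] at hk
    refine ⟨?_, by simp⟩
    rw [sum_update_eq]
    omega
  · intro k hk
    rw [Finset.mem_filter, Finset.Nat.mem_antidiagonalTuple] at hk
    rw [Finset.Nat.mem_antidiagonalTuple, sum_update_eq]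
    obtain ⟨hs, hcj⟩ := hk
    rw [sum_eq_self k j] at hs
    omega
  · intro k _
    funext i
    rcases eq_or_ne i j with rfl | h
    · simp
    · simp [Function.update_of_ne h]
  · intro k hk
    rw [Finset.mem_filter] at hk
    funext i
    rcases eq_or_ne i j with rfl | h
    · simp [Nat.sub_add_cancel hk.2]
    · simp [Function.update_of_ne h]
  · intro k _
    rw [← Finset.mul_prod_erase _ _ (Finset.mem_univ j),
      ← Finset.mul_prod_erase (f := fun i => v i ^ Function.update k j (k j + c) i) _
        (Finset.mem_univ j)]
    rw [Function.update_self, pow_add]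
    have : ∀ i ∈ Finset.univ.erase j,
        v i ^ Function.update k j (k j + c) i = v i ^ k i := fun i hi => by
      rw [Function.update_of_ne (Finset.ne_of_mem_erase hi)]
    rw [Finset.prod_congr rfl this]
    ring

lemma perj (n m : ℕ) (v : Fin n → ℝ) (j : Fin n) :
    ∑ i ∈ Finset.range (m + 1), v j ^ (i + 1) * S n v (m - i)
      = ∑ k ∈ Finset.Nat.antidiagonalTuple n (m + 1), (k j : ℝ) * ∏ i, v i ^ k i := by
  have h1 : ∀ i ∈ Finset.range (m + 1),
      v j ^ (i + 1) * S n v (m - i)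
        = ∑ k ∈ (Finset.Nat.antidiagonalTuple n (m + 1)).filter (fun k => i + 1 ≤ k j),
            ∏ i', v i' ^ k i' := by
    intro i hi
    rw [Finset.mem_range] at hi
    have := shift_lemma n (m + 1) (i + 1) v j (by omega) (by omega)
    rwa [show m + 1 - (i + 1) = m - i by omega] at this
  rw [Finset.sum_congr rfl h1]
  simp only [Finset.sum_filter]
  rw [Finset.sum_comm]
  refine Finset.sum_congr rfl fun k hk => ?_
  have hkj : k j ≤ m + 1 := by
    rw [Finset.Nat.mem_antidiagonalTuple] at hk
    calc k j ≤ ∑ i, k i := Finset.single_le_sum (fun i _ => Nat.zero_le _) (Finset.mem_univ j)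
    _ = m + 1 := hk
  have h2 : ∀ i ∈ Finset.range (m + 1),
      (if i + 1 ≤ k j then (∏ i', v i' ^ k i') else 0)
        = if i < k j then (∏ i', v i' ^ k i') else 0 := by
    intro i _; congr 1
  rw [Finset.sum_congr rfl h2, ← Finset.sum_filter]
  have : (Finset.range (m + 1)).filter (fun i => i < k j) = Finset.range (k j) := by
    ext i
    simp only [Finset.mem_filter, Finset.mem_range]
    omega
  rw [this, Finset.sum_const, Finset.card_range, nsmul_eq_mul]

lemma newton (n m : ℕ) (v : Fin n → ℝ) :
    ∑ i ∈ Finset.range (m + 1), (∑ j, v j ^ (i + 1)) * S n v (m - i)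
      = (m + 1) * S n v (m + 1) := by
  simp only [Finset.sum_mul]
  rw [Finset.sum_comm]
  have : ∀ j, (∑ i ∈ Finset.range (m+1), v j ^ (i+1) * S n v (m - i))
      = ∑ k ∈ Finset.Nat.antidiagonalTuple n (m + 1), (k j : ℝ) * ∏ i, v i ^ k i :=
    fun j => perj n m v j
  rw [Finset.sum_congr rfl fun j _ => this j, Finset.sum_comm]
  rw [S, Finset.mul_sum]
  refine Finset.sum_congr rfl fun k hk => ?_
  rw [← Finset.sum_mul, ← Nat.cast_sum]
  rw [Finset.Nat.mem_antidiagonalTuple] at hk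
  rw [hk]
  push_cast
  ring

lemma S_snoc (n m : ℕ) (v : Fin n → ℝ) (y : ℝ) :
    S (n + 1) (Fin.snoc v y) m = ∑ i ∈ Finset.range (m + 1), y ^ i * S n v (m - i) := by
  simp only [S, Finset.mul_sum]
  rw [Finset.sum_sigma']
  refine (Finset.sum_nbij' (i := fun p => Fin.snoc p.2 p.1)
    (j := fun k => ⟨k (Fin.last n), Fin.init k⟩) ?_ ?_ ?_ ?_ ?_).symm
  · intro p hp
    rw [Finset.mem_sigma, Finset.mem_range, Finset.Nat.mem_antidiagonalTuple] at hp
    rw [Finset.Nat.mem_antidiagonalTuple, Fin.sum_univ_castSucc]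
    simp only [Fin.snoc_castSucc, Fin.snoc_last]
    omega
  · intro k hk
    rw [Finset.Nat.mem_antidiagonalTuple, Fin.sum_univ_castSucc] at hk
    have h1 : k (Fin.last n) < m + 1 := by omega
    have h2 : ∑ i : Fin n, Fin.init k i = m - k (Fin.last n) := by
      rw [show (∑ i : Fin n, Fin.init k i) = ∑ i : Fin n, k i.castSucc from
        Finset.sum_congr rfl fun i _ => rfl]
      omega
    exact Finset.mem_sigma.mpr ⟨Finset.mem_range.mpr h1, Finset.Nat.mem_antidiagonalTuple.mpr h2⟩
  · intro p hp
    rw [Finset.mem_sigma, Finset.mem_range, Finset.Nat.mem_antidiagonalTuple] at hp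
    refine Sigma.ext ?_ ?_
    · simp
    · simp [Fin.init_snoc]
  · intro k _
    simp [Fin.snoc_init_self]
  · intro p hp
    rw [Finset.mem_sigma, Finset.mem_range, Finset.Nat.mem_antidiagonalTuple] at hp
    rw [Fin.prod_univ_castSucc]
    simp only [Fin.snoc_castSucc, Fin.snoc_last]
    ring

lemma hsymm_eq_S (l : List ℝ) (m : ℕ) : hsymm l m = S l.length l.get m := rfl

lemma S_congr {n n' : ℕ} (h : n = n') (v : Fin n → ℝ) (v' : Fin n' → ℝ)
    (hv : ∀ i : Fin n', v' i = v (Fin.cast h.symm i)) (m : ℕ) : S n v m = S n' v' m := by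
  subst h
  have : v' = v := funext fun i => hv i
  rw [this]

lemma hsymm_append (l : List ℝ) (y : ℝ) (m : ℕ) :
    hsymm (l ++ [y]) m
      = ∑ i ∈ Finset.range (m + 1), y ^ i * S l.length l.get (m - i) := by
  rw [hsymm_eq_S, ← S_snoc]
  refine S_congr ?_ _ _ ?_ m
  · simp
  · intro i
    refine Fin.lastCases ?_ ?_ i
    · simp only [Fin.snoc_last]
      have : ((l ++ [y]).get (Fin.cast (by simp) (Fin.last l.length))) = y := by
        simp [List.getElem_append_right]
      rw [this]
    · intro j
      simp only [Fin.snoc_castSucc]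
      have : ((l ++ [y]).get (Fin.cast (by simp) j.castSucc)) = l.get j := by
        simp [List.getElem_append_left]
      rw [this]

lemma seg_length (x : ℕ → ℝ) (q : ℕ) : (seg x 0 q).length = q + 1 := by simp [seg]

lemma seg_get (x : ℕ → ℝ) (q : ℕ) (i : Fin (seg x 0 q).length) :
    (seg x 0 q).get i = x i := by
  rw [List.get_eq_getElem]
  simp [seg]

lemma fin_sum_congr {α : Type*} [AddCommMonoid α] (q n : ℕ) (h : n = q + 1)
    (f : Fin n → α) (g : ℕ → α) (hfg : ∀ j : Fin n, f j = g j) :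
    ∑ j : Fin n, f j = ∑ j ∈ Finset.range (q + 1), g j := by
  subst h
  rw [← Fin.sum_univ_eq_sum_range g]
  exact Finset.sum_congr rfl fun j _ => hfg j

lemma key_sum (q m : ℕ) (x : ℕ → ℝ) :
    ∑ j ∈ Finset.range (q + 1), x j * hsymm (seg x 0 q ++ [x j]) m
      = (m + 1) * hsymm (seg x 0 q) (m + 1) := by
  have hlen : (seg x 0 q).length = q + 1 := seg_length x q
  calc ∑ j ∈ Finset.range (q + 1), x j * hsymm (seg x 0 q ++ [x j]) m
      = ∑ j ∈ Finset.range (q + 1), ∑ i ∈ Finset.range (m + 1),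
          x j ^ (i + 1) * S (seg x 0 q).length (seg x 0 q).get (m - i) := by
        refine Finset.sum_congr rfl fun j _ => ?_
        rw [hsymm_append, Finset.mul_sum]
        exact Finset.sum_congr rfl fun i _ => by rw [pow_succ]; ring
    _ = ∑ i ∈ Finset.range (m + 1), ∑ j ∈ Finset.range (q + 1),
          x j ^ (i + 1) * S (seg x 0 q).length (seg x 0 q).get (m - i) := Finset.sum_comm
    _ = ∑ i ∈ Finset.range (m + 1), ∑ j : Fin (seg x 0 q).length,
          ((seg x 0 q).get j) ^ (i + 1) * S (seg x 0 q).length (seg x 0 q).get (m - i) := by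
        refine Finset.sum_congr rfl fun i _ => ?_
        exact (fin_sum_congr q _ hlen _ _ (fun j => by rw [seg_get])).symm
    _ = ∑ i ∈ Finset.range (m + 1), (∑ j : Fin (seg x 0 q).length, ((seg x 0 q).get j) ^ (i + 1))
          * S (seg x 0 q).length (seg x 0 q).get (m - i) := by
        simp [Finset.sum_mul]
    _ = (m + 1) * S (seg x 0 q).length (seg x 0 q).get (m + 1) := newton _ m _
    _ = (m + 1) * hsymm (seg x 0 q) (m + 1) := by rw [hsymm_eq_S]

lemma card_adt_le (n m : ℕ) :
    (Finset.Nat.antidiagonalTuple n m).card ≤ (m + 1) ^ n := by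
  have hsub : Finset.Nat.antidiagonalTuple n m
      ⊆ Fintype.piFinset (fun _ : Fin n => Finset.range (m + 1)) := by
    intro k hk
    rw [Finset.Nat.mem_antidiagonalTuple] at hk
    rw [Fintype.mem_piFinset]
    intro i
    rw [Finset.mem_range]
    have := Finset.single_le_sum (f := k) (fun i _ => Nat.zero_le _) (Finset.mem_univ i)
    omega
  calc (Finset.Nat.antidiagonalTuple n m).card
      ≤ (Fintype.piFinset (fun _ : Fin n => Finset.range (m + 1))).card :=
        Finset.card_le_card hsub
    _ = (m + 1) ^ n := by simp [Fintype.card_piFinset]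

lemma S_bound (n : ℕ) (v : Fin n → ℝ) (B : ℝ) (hB : 1 ≤ B) (hv : ∀ i, |v i| ≤ B) (m : ℕ) :
    |S n v m| ≤ ((2:ℝ) ^ n * B) ^ m := by
  have hB0 : (0:ℝ) ≤ B := le_trans zero_le_one hB
  have h1 : |S n v m| ≤ ∑ k ∈ Finset.Nat.antidiagonalTuple n m, B ^ m := by
    refine le_trans (Finset.abs_sum_le_sum_abs _ _) (Finset.sum_le_sum fun k hk => ?_)
    rw [Finset.abs_prod]
    have h2 : ∀ i ∈ Finset.univ, |v i ^ k i| ≤ B ^ k i := fun i _ => by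
      rw [abs_pow]; exact pow_le_pow_left₀ (abs_nonneg _) (hv i) _
    refine le_trans (Finset.prod_le_prod (fun i _ => abs_nonneg _) h2) ?_
    rw [Finset.prod_pow_eq_pow_sum]
    rw [Finset.Nat.mem_antidiagonalTuple] at hk
    rw [hk]
  rw [Finset.sum_const, nsmul_eq_mul] at h1
  refine le_trans h1 ?_
  have h3 : ((Finset.Nat.antidiagonalTuple n m).card : ℝ) ≤ ((m:ℝ) + 1) ^ n := by
    exact_mod_cast card_adt_le n m
  have h4 : ((m:ℝ) + 1) ^ n ≤ ((2:ℝ) ^ m) ^ n := by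
    refine pow_le_pow_left₀ (by positivity) ?_ n
    exact_mod_cast (Nat.lt_two_pow_self (n := m))
  calc ((Finset.Nat.antidiagonalTuple n m).card : ℝ) * B ^ m
      ≤ ((2:ℝ) ^ m) ^ n * B ^ m := by
        refine mul_le_mul_of_nonneg_right (le_trans h3 h4) (by positivity)
    _ = ((2:ℝ) ^ n * B) ^ m := by rw [mul_pow, ← pow_mul, ← pow_mul, Nat.mul_comm]

lemma hsymm_bound (l : List ℝ) : ∃ C : ℝ, 1 ≤ C ∧ ∀ m, |hsymm l m| ≤ C ^ m := by
  set B : ℝ := 1 + ∑ i : Fin l.length, |l.get i| with hBdef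
  have hB : 1 ≤ B := by
    have : (0:ℝ) ≤ ∑ i : Fin l.length, |l.get i| :=
      Finset.sum_nonneg fun i _ => abs_nonneg _
    rw [hBdef]; linarith
  have hv : ∀ i, |l.get i| ≤ B := by
    intro i
    have h := Finset.single_le_sum (f := fun i => |l.get i|)
      (fun i _ => abs_nonneg _) (Finset.mem_univ i)
    rw [hBdef]; linarith
  refine ⟨(2:ℝ) ^ l.length * B, ?_, fun m => S_bound l.length l.get B hB hv m⟩
  calc (1:ℝ) ≤ B := hB
    _ ≤ 2 ^ l.length * B := le_mul_of_one_le_left (by linarith)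
        (one_le_pow₀ (by norm_num : (1:ℝ) ≤ 2))

lemma term_bound (C R : ℝ) (hC : 1 ≤ C) (hR : 1 ≤ R) (q m : ℕ) :
    ((q:ℝ) + m + 1) * R ^ (q + m) / (Nat.factorial (q + m) : ℝ) * C ^ m
      ≤ (((q:ℝ) + 1) * R ^ q) * ((2 * R * C) ^ m / (Nat.factorial m : ℝ)) := by
  have hR0 : (0:ℝ) ≤ R := le_trans zero_le_one hR
  have hC0 : (0:ℝ) ≤ C := le_trans zero_le_one hC
  have h1 : ((Nat.factorial m : ℝ) : ℝ) ≤ ((Nat.factorial (q + m) : ℝ) : ℝ) :=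
    Nat.cast_le.mpr (Nat.factorial_le (by omega))
  have h2 : ((q:ℝ) + m + 1) ≤ ((q:ℝ) + 1) * 2 ^ m := by
    have hn : q + m + 1 ≤ (q + 1) * 2 ^ m := by
      calc q + m + 1 ≤ (q + 1) * (m + 1) := by nlinarith
        _ ≤ (q + 1) * 2 ^ m := Nat.mul_le_mul_left _ (Nat.lt_two_pow_self (n := m))
    calc ((q:ℝ) + m + 1) = ((q + m + 1 : ℕ) : ℝ) := by push_cast; ring
      _ ≤ (((q + 1) * 2 ^ m : ℕ) : ℝ) := Nat.cast_le.mpr hn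
      _ = ((q:ℝ) + 1) * 2 ^ m := by push_cast; ring
  have key : ((q:ℝ) + m + 1) * R ^ (q + m) / (Nat.factorial (q + m) : ℝ) * C ^ m
      = (((q:ℝ) + m + 1) * (R ^ q * R ^ m * C ^ m)) / (Nat.factorial (q + m) : ℝ) := by
    rw [pow_add]; ring
  have key2 : (((q:ℝ) + 1) * R ^ q) * ((2 * R * C) ^ m / (Nat.factorial m : ℝ))
      = ((((q:ℝ) + 1) * 2 ^ m) * (R ^ q * R ^ m * C ^ m)) / (Nat.factorial m : ℝ) := by
    rw [mul_pow, mul_pow]; ring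
  rw [key, key2]
  refine div_le_div₀ (by positivity) ?_ (by positivity) h1
  exact mul_le_mul_of_nonneg_right h2 (by positivity)

lemma norm_term_le (C R : ℝ) (hC : 1 ≤ C) (hR : 1 ≤ R) (q : ℕ) (c w : ℕ → ℝ)
    (hc : ∀ m, |c m| ≤ C ^ m) (hw : ∀ m, |w m| ≤ (q:ℝ) + m + 1)
    (t : ℝ) (ht : |t| ≤ R) (m : ℕ) :
    |w m * (t ^ (q + m) / (Nat.factorial (q + m) : ℝ) * c m)| ≤ (((q:ℝ) + 1) * R ^ q) * ((2 * R * C) ^ m / (Nat.factorial m : ℝ)) := by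
  refine le_trans ?_ (term_bound C R hC hR q m)
  rw [abs_mul, abs_mul, abs_div, abs_pow]
  rw [abs_of_nonneg (show (0:ℝ) ≤ ((Nat.factorial (q + m) : ℝ) : ℝ) by positivity)]
  calc |w m| * (|t| ^ (q + m) / ((Nat.factorial (q + m) : ℝ) : ℝ) * |c m|)
      = |w m| * |t| ^ (q + m) / ((Nat.factorial (q + m) : ℝ) : ℝ) * |c m| := by ring
    _ ≤ (((q:ℝ) + m + 1)) * R ^ (q + m) / ((Nat.factorial (q + m) : ℝ) : ℝ) * C ^ m := by
        gcongr <;>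
          first
          | exact hw m
          | exact hc m
          | exact ht
          | positivity

lemma summable_u (C R : ℝ) (q : ℕ) :
    Summable (fun m : ℕ => (((q:ℝ) + 1) * R ^ q) * ((2 * R * C) ^ m / (Nat.factorial m : ℝ))) :=
  (Real.summable_pow_div_factorial (2 * R * C)).mul_left _

lemma summable_term (C : ℝ) (hC : 1 ≤ C) (q : ℕ) (c w : ℕ → ℝ)
    (hc : ∀ m, |c m| ≤ C ^ m) (hw : ∀ m, |w m| ≤ (q:ℝ) + m + 1) (t : ℝ) :
    Summable (fun m : ℕ => w m * (t ^ (q + m) / (Nat.factorial (q + m) : ℝ) * c m)) := by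
  refine Summable.of_norm_bounded (summable_u C (max 1 |t|) q) ?_
  intro m
  exact norm_term_le C (max 1 |t|) hC (le_max_left _ _) q c w hc hw t (le_max_right _ _) m

lemma dde_eq (l : List ℝ) (p : ℕ) (h : l.length = p + 1) (t : ℝ) :
    dde t l = ∑' m : ℕ, t ^ (p + m) / (Nat.factorial (p + m) : ℝ) * hsymm l m := by
  rw [dde, if_neg (by omega)]
  simp only [h, Nat.add_sub_cancel]

lemma g'_norm_le (C R : ℝ) (hC : 1 ≤ C) (hR : 1 ≤ R) (q : ℕ) (c : ℕ → ℝ)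
    (hc : ∀ m, |c m| ≤ C ^ m) (m : ℕ) (y : ℝ) (hy : |y| ≤ R) :
    |(↑(q + m) * (-y) ^ (q + m - 1) * (-1)) / (Nat.factorial (q + m) : ℝ) * c m|
      ≤ (((q:ℝ) + 1) * R ^ q) * ((2 * R * C) ^ m / (Nat.factorial m : ℝ)) := by
  refine le_trans ?_ (term_bound C R hC hR q m)
  rw [abs_mul, abs_div, abs_mul, abs_mul, abs_neg, abs_one, abs_pow, abs_neg, mul_one,
    Nat.abs_cast, abs_of_nonneg (show (0:ℝ) ≤ (Nat.factorial (q + m) : ℝ) by positivity)]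
  calc (↑(q + m) * |y| ^ (q + m - 1)) / (Nat.factorial (q + m) : ℝ) * |c m|
      ≤ (((q:ℝ) + m + 1) * R ^ (q + m)) / (Nat.factorial (q + m) : ℝ) * C ^ m := by
        gcongr ?_ * ?_ / _ * ?_
        · push_cast; linarith
        · calc |y| ^ (q + m - 1) ≤ R ^ (q + m - 1) :=
              pow_le_pow_left₀ (abs_nonneg _) hy _
            _ ≤ R ^ (q + m) := pow_le_pow_right₀ hR (by omega)
        · exact hc m
    _ = ((q:ℝ) + m + 1) * R ^ (q + m) / (Nat.factorial (q + m) : ℝ) * C ^ m := by ring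

lemma dde_hasDerivAt (q : ℕ) (c : ℕ → ℝ) (C : ℝ) (hC : 1 ≤ C)
    (hc : ∀ m, |c m| ≤ C ^ m) (τ : ℝ) :
    HasDerivAt (fun t : ℝ => ∑' m : ℕ, (-t) ^ (q + m) / (Nat.factorial (q + m) : ℝ) * c m)
      (∑' m : ℕ, (↑(q + m) * (-τ) ^ (q + m - 1) * (-1)) / (Nat.factorial (q + m) : ℝ) * c m)
      τ := by
  set R : ℝ := |τ| + 1 with hR
  have hR1 : 1 ≤ R := by rw [hR]; linarith [abs_nonneg τ]
  have hmem : τ ∈ Metric.ball (0:ℝ) R := by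
    rw [Metric.mem_ball, Real.dist_eq, sub_zero, hR]; linarith
  refine hasDerivAt_tsum_of_isPreconnected
    (g := fun m t => (-t) ^ (q + m) / (Nat.factorial (q + m) : ℝ) * c m)
    (g' := fun m y => (↑(q + m) * (-y) ^ (q + m - 1) * (-1)) / (Nat.factorial (q + m) : ℝ) * c m)
    (summable_u C R q)
    (Metric.isOpen_ball (x := (0:ℝ)) (ε := R)) (convex_ball (0:ℝ) R).isPreconnected
    (fun m y _ => ?_) (fun m y hy => ?_) hmem ?_ hmem
  · have h0 : HasDerivAt (fun t : ℝ => -t) (-1 : ℝ) y := (hasDerivAt_id y).neg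
    have h1 : HasDerivAt (fun t : ℝ => (-t) ^ (q + m))
        ((↑(q + m) : ℝ) * (-y) ^ (q + m - 1) * (-1)) y :=
      HasDerivAt.comp y (hasDerivAt_pow (q + m) (-y)) h0
    exact (h1.div_const ((Nat.factorial (q + m) : ℝ))).mul_const (c m)
  · rw [Real.norm_eq_abs]
    refine g'_norm_le C R hC hR1 q c hc m y ?_
    rw [Metric.mem_ball, Real.dist_eq, sub_zero] at hy
    exact le_of_lt hy
  · refine ((summable_term C hC q c (fun _ => 1) hc
      (fun m => by
        rw [abs_one]
        have h1 : (0:ℝ) ≤ (q:ℝ) := Nat.cast_nonneg q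
        have h2 : (0:ℝ) ≤ (m:ℝ) := Nat.cast_nonneg m
        linarith) (-τ)).congr fun m => ?_)
    ring


/-- **Weighted, repeated-argument sum simplification** (Lemma 2): for every `q ≥ 0`, tuple
`(x_0, …, x_q)` and real `τ`,
`Σ_{j=0}^{q} x_j e^{-τ[x_0,…,x_q,x_j]} = (τ ∂/∂τ − q) e^{-τ[x_0,…,x_q]}`. -/
theorem weighted_repeatedarg_sum (q : ℕ) (x : ℕ → ℝ) (τ : ℝ) :
    ∑ j ∈ Finset.range (q + 1), x j * dde (-τ) (seg x 0 q ++ [x j])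
      = τ * deriv (fun t : ℝ => dde (-t) (seg x 0 q)) τ - q * dde (-τ) (seg x 0 q) := by
  have hlen : (seg x 0 q).length = q + 1 := seg_length x q
  obtain ⟨C, hC, hc⟩ := hsymm_bound (seg x 0 q)
  set l := seg x 0 q with hl
  set c : ℕ → ℝ := hsymm l with hcdef
  have hw1 : ∀ m : ℕ, |(1:ℝ)| ≤ (q:ℝ) + m + 1 := fun m => by
    rw [abs_one]
    have h1 : (0:ℝ) ≤ (q:ℝ) := Nat.cast_nonneg q
    have h2 : (0:ℝ) ≤ (m:ℝ) := Nat.cast_nonneg m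
    linarith
  have hwm : ∀ m : ℕ, |(m:ℝ)| ≤ (q:ℝ) + m + 1 := fun m => by
    rw [Nat.abs_cast]
    have h1 : (0:ℝ) ≤ (q:ℝ) := Nat.cast_nonneg q
    linarith
  have hfun : (fun t : ℝ => dde (-t) l)
      = fun t : ℝ => ∑' m : ℕ, (-t) ^ (q + m) / (Nat.factorial (q + m) : ℝ) * c m :=
    funext fun t => dde_eq l q hlen (-t)
  have hD := dde_hasDerivAt q c C hC hc τ
  have hderiv : deriv (fun t : ℝ => dde (-t) l) τ
      = ∑' m : ℕ, (↑(q + m) * (-τ) ^ (q + m - 1) * (-1)) / (Nat.factorial (q + m) : ℝ) * c m := by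
    rw [hfun]; exact hD.deriv
  set F : ℕ → ℝ := fun m => (m:ℝ) * ((-τ) ^ (q + m) / (Nat.factorial (q + m) : ℝ) * c m)
    with hF
  have hFdef : ∀ k : ℕ, F k = (k:ℝ) * ((-τ) ^ (q + k) / (Nat.factorial (q + k) : ℝ) * c k) :=
    fun k => rfl
  have hsumF : Summable F := summable_term C hC q c (fun m => (m:ℝ)) hc hwm (-τ)
  have hsumg : Summable (fun m : ℕ => (-τ) ^ (q + m) / (Nat.factorial (q + m) : ℝ) * c m) :=
    (summable_term C hC q c (fun _ => 1) hc hw1 (-τ)).congr fun m => by ring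
  have hsumg' : Summable (fun m : ℕ =>
      (↑(q + m) * (-τ) ^ (q + m - 1) * (-1)) / (Nat.factorial (q + m) : ℝ) * c m) := by
    refine Summable.of_norm_bounded (summable_u C (|τ| + 1) q) fun m => ?_
    rw [Real.norm_eq_abs]
    exact g'_norm_le C (|τ| + 1) hC (by linarith [abs_nonneg τ]) q c hc m τ
      (by linarith [abs_nonneg τ])
  have hpt : ∀ m : ℕ,
      τ * ((↑(q + m) * (-τ) ^ (q + m - 1) * (-1)) / (Nat.factorial (q + m) : ℝ) * c m)
        - (q:ℝ) * ((-τ) ^ (q + m) / (Nat.factorial (q + m) : ℝ) * c m) = F m := by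
    intro m
    rw [hFdef]
    rcases Nat.eq_zero_or_pos (q + m) with h | h
    · have hq : q = 0 := by omega
      have hm : m = 0 := by omega
      subst hq; subst hm; norm_num
    · have e1 : (-τ) ^ (q + m) = (-τ) ^ (q + m - 1) * (-τ) := by
        rw [← pow_succ]
        congr 1
        omega
      rw [e1]
      push_cast
      ring
  have hRHS : τ * deriv (fun t : ℝ => dde (-t) l) τ - (q:ℝ) * dde (-τ) l = ∑' m, F m := by
    rw [hderiv, dde_eq l q hlen (-τ), ← tsum_mul_left, ← tsum_mul_left,
      ← Summable.tsum_sub (hsumg'.mul_left τ) (hsumg.mul_left (q:ℝ))]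
    exact tsum_congr hpt
  have hLHS : ∑ j ∈ Finset.range (q + 1), x j * dde (-τ) (l ++ [x j])
      = ∑' m : ℕ, F (m + 1) := by
    have happ : ∀ j : ℕ, dde (-τ) (l ++ [x j])
        = ∑' m : ℕ, (-τ) ^ (q + 1 + m) / (Nat.factorial (q + 1 + m) : ℝ)
            * hsymm (l ++ [x j]) m :=
      fun j => dde_eq (l ++ [x j]) (q + 1) (by simp [hl, seg_length]) (-τ)
    have hsum_j : ∀ j ∈ Finset.range (q + 1), Summable (fun m : ℕ =>
        x j * ((-τ) ^ (q + 1 + m) / (Nat.factorial (q + 1 + m) : ℝ)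
          * hsymm (l ++ [x j]) m)) := by
      intro j _
      obtain ⟨Cj, hCj, hcj⟩ := hsymm_bound (l ++ [x j])
      have hw1' : ∀ m : ℕ, |(1:ℝ)| ≤ ((q+1:ℕ):ℝ) + m + 1 := fun m => by
        rw [abs_one]
        have h1 : (0:ℝ) ≤ ((q+1:ℕ):ℝ) := Nat.cast_nonneg _
        have h2 : (0:ℝ) ≤ (m:ℝ) := Nat.cast_nonneg m
        linarith
      exact ((summable_term Cj hCj (q + 1) (hsymm (l ++ [x j])) (fun _ => 1) hcj hw1'
        (-τ)).congr fun m => by ring).mul_left (x j)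
    calc ∑ j ∈ Finset.range (q + 1), x j * dde (-τ) (l ++ [x j])
        = ∑ j ∈ Finset.range (q + 1), ∑' m : ℕ,
            x j * ((-τ) ^ (q + 1 + m) / (Nat.factorial (q + 1 + m) : ℝ)
              * hsymm (l ++ [x j]) m) := by
          refine Finset.sum_congr rfl fun j _ => ?_
          rw [happ j, ← tsum_mul_left]
      _ = ∑' m : ℕ, ∑ j ∈ Finset.range (q + 1),
            x j * ((-τ) ^ (q + 1 + m) / (Nat.factorial (q + 1 + m) : ℝ)
              * hsymm (l ++ [x j]) m) := (Summable.tsum_finsetSum hsum_j).symm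
      _ = ∑' m : ℕ, F (m + 1) := by
          refine tsum_congr fun m => ?_
          have hk := key_sum q m x
          rw [← hl] at hk
          calc ∑ j ∈ Finset.range (q + 1),
              x j * ((-τ) ^ (q + 1 + m) / (Nat.factorial (q + 1 + m) : ℝ)
                * hsymm (l ++ [x j]) m)
              = ((-τ) ^ (q + 1 + m) / (Nat.factorial (q + 1 + m) : ℝ))
                * ∑ j ∈ Finset.range (q + 1), x j * hsymm (l ++ [x j]) m := by
                rw [Finset.mul_sum]
                exact Finset.sum_congr rfl fun j _ => by ring
            _ = ((-τ) ^ (q + 1 + m) / (Nat.factorial (q + 1 + m) : ℝ))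
                * (((m:ℝ) + 1) * hsymm l (m + 1)) := by rw [hk]
            _ = F (m + 1) := by
                rw [hFdef (m + 1), show q + (m + 1) = q + 1 + m from by omega]
                push_cast
                ring
  rw [hRHS, Summable.tsum_eq_zero_add hsumF, hLHS, hFdef 0]
  norm_num
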